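/- Let (Ω, 𝔽, P) be a probability space, let S, R : Ω → ℝ be nonnegative integrable random variables, and let ρ > 0. Define d* = 1 on the event {R ≥ ρ·S} and d* = 0 otherwise, and assume E[(1−d*)·S] = E[d*·R]. Then for every measurable function D : Ω → [0,1] satisfying E[(1−D)·S] = E[D·R], one has E[D·R] ≤ E[d*·R]. (Probabilistic form of Theorem 3: among all randomized link-selection rules satisfying the flow-balance constraint in expectation, the threshold rule d* maximizes the expected throughput E[D·R].) -/

import Mathlib

open MeasureTheory

/-- **Probabilistic form of Theorem 3.** On a probability space, with
nonnegative integrable random link capacities `S` and `R` and threshold rule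
`d* = 1{R ≥ ρS}` satisfying the flow-balance constraint
`E[(1−d*)S] = E[d*R]`, the rule `d*` maximizes the expected throughput
`E[D·R]` among all measurable randomized selection rules `D : Ω → [0,1]`
satisfying the flow-balance constraint `E[(1−D)S] = E[D·R]`. -/
theorem threshold_rule_maximizes_expected_throughput
    {Ω : Type*} [MeasurableSpace Ω] (P : Measure Ω) [IsProbabilityMeasure P]
    (S R : Ω → ℝ) (hS0 : ∀ ω, 0 ≤ S ω) (hR0 : ∀ ω, 0 ≤ R ω)
    (hSint : Integrable S P) (hRint : Integrable R P)
    (ρ : ℝ) (hρ : 0 < ρ)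
    (dstar : Ω → ℝ)
    (hdstar : ∀ ω, dstar ω = if ρ * S ω ≤ R ω then 1 else 0)
    (hbalstar : ∫ ω, (1 - dstar ω) * S ω ∂P = ∫ ω, dstar ω * R ω ∂P)
    (D : Ω → ℝ) (hDmeas : Measurable D)
    (hD01 : ∀ ω, D ω ∈ Set.Icc (0 : ℝ) 1)
    (hbalD : ∫ ω, (1 - D ω) * S ω ∂P = ∫ ω, D ω * R ω ∂P) :
    ∫ ω, D ω * R ω ∂P ≤ ∫ ω, dstar ω * R ω ∂P := by
  obtain ⟨S', hS'm, hS'⟩ := hSint.1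
  obtain ⟨R', hR'm, hR'⟩ := hRint.1
  have hdmeas : AEStronglyMeasurable dstar P := by
    refine ⟨fun ω => if ρ * S' ω ≤ R' ω then (1:ℝ) else 0, ?_, ?_⟩
    · exact (Measurable.ite (measurableSet_le (hS'm.measurable.const_mul ρ)
        hR'm.measurable) measurable_const measurable_const).stronglyMeasurable
    · filter_upwards [hS', hR'] with ω h1 h2
      rw [hdstar ω, h1, h2]
  have hDb : ∃ C, ∀ ω, ‖D ω‖ ≤ C := ⟨1, fun ω => by
    rw [Real.norm_eq_abs, abs_le]
    exact ⟨by linarith [(hD01 ω).1], (hD01 ω).2⟩⟩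
  have hdb : ∃ C, ∀ ω, ‖dstar ω‖ ≤ C := ⟨1, fun ω => by
    rw [hdstar ω]; split_ifs <;> simp⟩
  have hDR := hRint.bdd_mul hDmeas.aestronglyMeasurable (Filter.Eventually.of_forall hDb.choose_spec)
  have hDS := hSint.bdd_mul hDmeas.aestronglyMeasurable (Filter.Eventually.of_forall hDb.choose_spec)
  have hdR := hRint.bdd_mul hdmeas (Filter.Eventually.of_forall hdb.choose_spec)
  have hdS := hSint.bdd_mul hdmeas (Filter.Eventually.of_forall hdb.choose_spec)
  have hexpD : ∫ ω, (1 - D ω) * S ω ∂P = ∫ ω, S ω ∂P - ∫ ω, D ω * S ω ∂P := by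
    rw [← integral_sub hSint hDS]
    congr 1; ext ω; ring
  have hexpd : ∫ ω, (1 - dstar ω) * S ω ∂P
      = ∫ ω, S ω ∂P - ∫ ω, dstar ω * S ω ∂P := by
    rw [← integral_sub hSint hdS]
    congr 1; ext ω; ring
  have hbD : ∫ ω, D ω * S ω ∂P = ∫ ω, S ω ∂P - ∫ ω, D ω * R ω ∂P := by
    rw [hexpD] at hbalD; linarith
  have hbd : ∫ ω, dstar ω * S ω ∂P = ∫ ω, S ω ∂P - ∫ ω, dstar ω * R ω ∂P := by
    rw [hexpd] at hbalstar; linarith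
  have hpt : ∀ ω, D ω * R ω - ρ * (D ω * S ω)
      ≤ dstar ω * R ω - ρ * (dstar ω * S ω) := by
    intro ω
    rw [hdstar ω]
    split_ifs with h
    · nlinarith [(hD01 ω).1, (hD01 ω).2, hS0 ω, hR0 ω,
        mul_nonneg (sub_nonneg.2 (hD01 ω).2) (sub_nonneg.2 h)]
    · push_neg at h
      nlinarith [(hD01 ω).1, mul_nonneg (hD01 ω).1 (le_of_lt (sub_pos.2 h))]
  have hle : ∫ ω, (D ω * R ω - ρ * (D ω * S ω)) ∂P
      ≤ ∫ ω, (dstar ω * R ω - ρ * (dstar ω * S ω)) ∂P :=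
    integral_mono (hDR.sub (hDS.const_mul ρ)) (hdR.sub (hdS.const_mul ρ)) hpt
  rw [integral_sub hDR (hDS.const_mul ρ), integral_sub hdR (hdS.const_mul ρ),
      integral_const_mul, integral_const_mul, hbD, hbd] at hle
  nlinarith [hle, hρ]
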